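/- If M is a supersolvable matroid of rank r with maximal chain of modular flats ∅ = X₀ ⊂ X₁ ⊂ ... ⊂ X_r = E(M) (rank Xᵢ = i, M simple), then χ(M;λ) = Π_{i=1}^{r} (λ - (|Xᵢ| - |X_{i-1}|)); in particular all characteristic roots of M are nonnegative integers. -/

import Mathlib

open Finset Polynomial

section MatroidDefs

variable {α : Type} [Fintype α] [DecidableEq α]

/-- The rank of a set `X` in a matroid `M`: the largest size of an independent subset
of `X`. -/
noncomputable def mrk (M : Matroid α) (X : Set α) : ℕ :=
  sSup {n | ∃ I, M.Indep I ∧ I ⊆ X ∧ I.ncard = n}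

/-- A matroid is simple if every pair of elements of the ground set is independent
(equivalently, it has no loops and no parallel pairs). -/
def mSimple (M : Matroid α) : Prop :=
  ∀ e f, e ∈ M.E → f ∈ M.E → M.Indep {e, f}

/-- The characteristic polynomial of a matroid on the ground set `α`, via the Whitney
rank expansion `χ(M;λ) = Σ_{A ⊆ E} (-1)^{|A|} λ^{r(E) - r(A)}` (which agrees with the
Möbius-function definition for loopless matroids). -/
noncomputable def charPoly (M : Matroid α) : Polynomial ℤ :=
  ∑ A : Finset α, C ((-1 : ℤ) ^ A.card) * X ^ (mrk M Set.univ - mrk M (A : Set α))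

/-- The number of lines (rank-2 flats) of `M` with exactly `k` points. -/
noncomputable def lineCount (M : Matroid α) (k : ℕ) : ℕ :=
  Nat.card {F : Set α | M.IsFlat F ∧ mrk M F = 2 ∧ F.ncard = k}

/-- Every line (rank-2 flat) of `M` has at most 3 points. -/
def linesAtMost3 (M : Matroid α) : Prop :=
  ∀ F : Set α, M.IsFlat F → mrk M F = 2 → F.ncard ≤ 3

/-- An integer polynomial has only real roots. -/
def onlyRealRoots (p : Polynomial ℤ) : Prop :=
  (p.map (Int.castRingHom ℝ)).Splits

/-- An integer polynomial has only integral roots: every complex root is an integer. -/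
def onlyIntegerRoots (p : Polynomial ℤ) : Prop :=
  ∀ z ∈ (p.map (Int.castRingHom ℂ)).roots, ∃ k : ℤ, z = (k : ℂ)

/-- A matroid is connected if no proper nonempty subset of the ground set gives an
additive separation of the rank. -/
def mConnected (M : Matroid α) : Prop :=
  M.E.Nonempty ∧ ∀ A : Set α, A ⊆ M.E → A.Nonempty → (M.E \ A).Nonempty →
    mrk M A + mrk M (M.E \ A) ≠ mrk M M.E

/-- A flat `X` of `M` is modular if every line `L` with
`rank(X ∨ L) = rank(X) + 1` meets `X`. -/
def modularFlat (M : Matroid α) (Y : Set α) : Prop :=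
  M.IsFlat Y ∧ ∀ L : Set α, M.IsFlat L → mrk M L = 2 →
    mrk M (Y ∪ L) = mrk M Y + 1 → (Y ∩ L).Nonempty

end MatroidDefs


set_option linter.unusedSectionVars false

section Aux
variable {α : Type} [Fintype α] [DecidableEq α] {M : Matroid α} {I X Y : Set α} {e f : α}

lemma mrk_eq_of_basis (hI : M.IsBasis I X) : mrk M X = I.ncard := by
  have h1 : {n | ∃ J, M.Indep J ∧ J ⊆ X ∧ J.ncard = n} = Set.Iic I.ncard := by
    ext n
    simp only [Set.mem_setOf_eq, Set.mem_Iic]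
    constructor
    · rintro ⟨J, hJ, hJX, rfl⟩
      obtain ⟨J', hJ', hJJ'⟩ := hJ.subset_isBasis_of_subset hJX hI.subset_ground
      have hc : J'.ncard = I.ncard := by
        rw [Set.ncard_def, Set.ncard_def, hI.encard_eq_encard hJ']
      exact hc ▸ Set.ncard_le_ncard hJJ' (Set.toFinite J')
    · intro hn
      obtain ⟨J, hJI, hJcard⟩ := Set.exists_subset_card_eq hn
      exact ⟨J, hI.indep.subset hJI, hJI.trans hI.subset, hJcard⟩
  rw [mrk, h1, csSup_Iic]

lemma mrk_mono' (hXY : X ⊆ Y) (hY : Y ⊆ M.E) : mrk M X ≤ mrk M Y := by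
  obtain ⟨I, hI⟩ := M.exists_isBasis X (hXY.trans hY)
  obtain ⟨J, hJ, hIJ⟩ := hI.indep.subset_isBasis_of_subset (hI.subset.trans hXY) hY
  rw [mrk_eq_of_basis hI, mrk_eq_of_basis hJ]
  exact Set.ncard_le_ncard hIJ (Set.toFinite J)

lemma mrk_insert_of_not_mem_closure (hX : X ⊆ M.E) (heE : e ∈ M.E)
    (he : e ∉ M.closure X) : mrk M (insert e X) = mrk M X + 1 := by
  obtain ⟨I, hI⟩ := M.exists_isBasis X hX
  have heI : e ∉ I := fun h => he (M.subset_closure X hX (hI.subset h))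
  have hind : M.Indep (insert e I) := by
    rw [hI.indep.insert_indep_iff_of_notMem heI]
    exact ⟨heE, fun h => he (by rwa [hI.closure_eq_closure] at h)⟩
  have hb := hI.insert_isBasis_insert hind
  rw [mrk_eq_of_basis hI, mrk_eq_of_basis hb,
    Set.ncard_insert_of_notMem heI (Set.toFinite I)]

lemma mrk_insert_of_mem_closure (hX : X ⊆ M.E) (he : e ∈ M.closure X) :
    mrk M (insert e X) = mrk M X := by
  obtain ⟨I, hI⟩ := M.exists_isBasis X hX
  have hb : M.IsBasis I (insert e X) :=
    hI.isBasis_closure_right.isBasis_subset (hI.subset.trans (Set.subset_insert e X))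
      (Set.insert_subset he (M.subset_closure X hX))
  rw [mrk_eq_of_basis hI, mrk_eq_of_basis hb]

lemma mrk_closure_pair (h : M.Indep {e, f}) (hef : e ≠ f) :
    mrk M (M.closure {e, f}) = 2 := by
  rw [mrk_eq_of_basis h.isBasis_self.isBasis_closure_right, Set.ncard_pair hef]

lemma sum_powerset_union_disjoint {β : Type*} [AddCommMonoid β] (s t : Finset α)
    (hd : Disjoint s t) (f : Finset α → β) :
    ∑ A ∈ (s ∪ t).powerset, f A = ∑ A₁ ∈ t.powerset, ∑ A₀ ∈ s.powerset, f (A₀ ∪ A₁) := by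
  rw [← Finset.sum_product']
  refine Finset.sum_bij' (i := fun A (_ : A ∈ (s ∪ t).powerset) => (A ∩ t, A ∩ s))
    (j := fun p (_ : p ∈ t.powerset ×ˢ s.powerset) => p.2 ∪ p.1) ?_ ?_ ?_ ?_ ?_
  · intro A hA
    simp only [mem_powerset] at hA
    simp [Finset.mem_product, Finset.inter_subset_right]
  · intro p hp
    simp only [Finset.mem_product, mem_powerset] at hp
    simp only [mem_powerset]
    exact Finset.union_subset (hp.2.trans Finset.subset_union_left)
      (hp.1.trans Finset.subset_union_right)
  · intro A hA
    have hA' := Finset.mem_powerset.mp hA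
    show A ∩ s ∪ A ∩ t = A
    rw [← Finset.inter_union_distrib_left, Finset.inter_eq_left.mpr hA']
  · intro p hp
    simp only [Finset.mem_product, mem_powerset] at hp
    have hds := Finset.disjoint_left.mp hd
    have h1 : (p.2 ∪ p.1) ∩ t = p.1 := by
      ext x
      simp only [Finset.mem_inter, Finset.mem_union]
      constructor
      · rintro ⟨h | h, hxt⟩
        · exact absurd hxt (Finset.disjoint_left.mp hd (hp.2 h))
        · exact h
      · intro h; exact ⟨Or.inr h, hp.1 h⟩
    have h2 : (p.2 ∪ p.1) ∩ s = p.2 := by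
      ext x
      simp only [Finset.mem_inter, Finset.mem_union]
      constructor
      · rintro ⟨h | h, hxs⟩
        · exact h
        · exact absurd (hp.1 h) (Finset.disjoint_left.mp hd hxs)
      · intro h; exact ⟨Or.inl h, hp.2 h⟩
    simp [h1, h2]
  · intro A hA
    have hA' := Finset.mem_powerset.mp hA
    show f A = f (A ∩ s ∪ A ∩ t)
    rw [← Finset.inter_union_distrib_left, Finset.inter_eq_left.mpr hA']

lemma flat_closure (M : Matroid α) (X : Set α) : M.IsFlat (M.closure X) := by
  have hne : Nonempty {F // M.IsFlat F ∧ X ∩ M.E ⊆ F} :=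
    ⟨⟨M.E, M.ground_isFlat, Set.inter_subset_right⟩⟩
  have h := Matroid.IsFlat.iInter (M := M)
    (Fs := fun F : {F // M.IsFlat F ∧ X ∩ M.E ⊆ F} => F.1) (fun F => F.2.1)
  have he : M.closure X = ⋂ F : {F // M.IsFlat F ∧ X ∩ M.E ⊆ F}, F.1 := by
    rw [Matroid.closure_def, Set.sInter_eq_iInter]
    exact Set.iInter_congr fun _ => rfl
  rwa [← he] at h


end Aux

/-- If `M` is a simple supersolvable matroid of rank `r` with maximal
chain of modular flats `∅ = F₀ ⊂ F₁ ⊂ ⋯ ⊂ F_r = E(M)` (with `rank Fᵢ = i`), then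
`χ(M;λ) = Π_{i=1}^{r} (λ - (|Fᵢ| - |F_{i-1}|))`; in particular all characteristic roots
of `M` are nonnegative integers. -/
theorem stmt18 {α : Type} [Fintype α] [DecidableEq α] (M : Matroid α)
    (hE : M.E = Set.univ) (hsimple : mSimple M)
    (r : ℕ) (hr : mrk M Set.univ = r)
    (F : Fin (r + 1) → Set α)
    (hmono : Monotone F)
    (h0 : F 0 = ∅) (htop : F (Fin.last r) = M.E)
    (hmod : ∀ i, modularFlat M (F i))
    (hrank : ∀ i : Fin (r + 1), mrk M (F i) = i) :
    charPoly M =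
      ∏ i : Fin r,
        (X - C (((F i.succ).ncard : ℤ) - ((F i.castSucc).ncard : ℤ))) ∧
    ∀ z ∈ ((charPoly M).map (Int.castRingHom ℂ)).roots, ∃ k : ℕ, z = (k : ℂ) := by
  classical
  have hsub : ∀ X : Set α, X ⊆ M.E := by intro X; rw [hE]; exact Set.subset_univ X
  have hmemE : ∀ a : α, a ∈ M.E := by intro a; rw [hE]; trivial
  -- the key induction on levels of the chain
  have key : ∀ j, j ≤ r → ∀ jf : Fin (r+1), (jf : ℕ) = j →
      ∑ A ∈ ((Set.toFinite (F jf)).toFinset).powerset,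
        (C ((-1 : ℤ) ^ A.card) * X ^ (j - mrk M (A : Set α))) =
      ∏ i ∈ Finset.range j, (X - C (((F ⟨min (i+1) r, by omega⟩).ncard : ℤ) -
        ((F ⟨min i r, by omega⟩).ncard : ℤ))) := by
    intro j
    induction j with
    | zero =>
      intro _ jf hjf
      obtain rfl : jf = 0 := Fin.eq_of_val_eq (by simpa using hjf)
      have hF0 : (Set.toFinite (F 0)).toFinset = (∅ : Finset α) :=
        Set.Finite.toFinset_eq_empty.mpr h0
      rw [hF0]
      simp
    | succ j ih =>
      intro hj jf hjf
      have hjr : j ≤ r := by omega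
      have hjf' : jf = ⟨j+1, Nat.lt_succ_of_le hj⟩ := Fin.eq_of_val_eq (by simpa using hjf)
      subst hjf'
      clear hjf
      set Fj : Set α := F ⟨j, by omega⟩ with hFjdef
      set Fj1 : Set α := F ⟨j+1, by omega⟩ with hFj1def
      have hFjflat : M.IsFlat Fj := (hmod _).1
      have hFj1flat : M.IsFlat Fj1 := (hmod _).1
      have hclosFj : M.closure Fj = Fj := hFjflat.closure
      have hrkFj : mrk M Fj = j := by simpa using hrank ⟨j, by omega⟩
      have hrkFj1 : mrk M Fj1 = j + 1 := by simpa using hrank ⟨j+1, by omega⟩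
      have hFsub : Fj ⊆ Fj1 := hmono (by simp [Fin.mk_le_mk])
      set s : Finset α := (Set.toFinite Fj).toFinset with hsdef
      set t : Finset α := (Set.toFinite Fj1).toFinset with htdef
      have hcoes : (↑s : Set α) = Fj := Set.Finite.coe_toFinset _
      have hmem_s : ∀ a, a ∈ s ↔ a ∈ Fj := fun a => Set.Finite.mem_toFinset _
      have hmem_t : ∀ a, a ∈ t ↔ a ∈ Fj1 := fun a => Set.Finite.mem_toFinset _
      have hst : s ⊆ t := fun a ha => (hmem_t a).mpr (hFsub ((hmem_s a).mp ha))
      set B : Finset α := t \ s with hBdef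
      have hBmem : ∀ a ∈ B, a ∈ Fj1 ∧ a ∉ Fj := by
        intro a ha
        rcases Finset.mem_sdiff.mp ha with ⟨h1, h2⟩
        exact ⟨(hmem_t a).mp h1, fun h => h2 ((hmem_s a).mpr h)⟩
      have hunion : s ∪ B = t := Finset.union_sdiff_of_subset hst
      have hdisj : Disjoint s B := Finset.disjoint_sdiff
      have hmrkA₀ : ∀ A₀ ∈ s.powerset, mrk M (↑A₀ : Set α) ≤ j := by
        intro A₀ hA₀
        have h1 : (↑A₀ : Set α) ⊆ Fj := by
          rw [← hcoes]; exact_mod_cast Finset.mem_powerset.mp hA₀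
        exact hrkFj ▸ mrk_mono' h1 (hsub _)
      -- single-element insertions from higher level
      have hSe : ∀ e', e' ∉ Fj → ∀ A₀ ∈ s.powerset,
          mrk M (↑(insert e' A₀) : Set α) = mrk M (↑A₀ : Set α) + 1 := by
        intro e' he' A₀ hA₀
        have h1 : (↑A₀ : Set α) ⊆ Fj := by
          rw [← hcoes]; exact_mod_cast Finset.mem_powerset.mp hA₀
        have h2 : e' ∉ M.closure (↑A₀ : Set α) := by
          intro hcon
          exact he' (hclosFj ▸ M.closure_subset_closure h1 hcon)
        rw [Finset.coe_insert]
        exact mrk_insert_of_not_mem_closure (hsub _) (hmemE e') h2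
      -- decompose the sum
      rw [← hunion, sum_powerset_union_disjoint s B hdisj]
      set Sj : Polynomial ℤ :=
        ∑ A₀ ∈ s.powerset, (C ((-1 : ℤ) ^ A₀.card) * X ^ (j - mrk M (↑A₀ : Set α)))
        with hSjdef
      -- inner sums with ≥ 2 new elements vanish
      have hcancel : ∀ A₁ ∈ B.powerset, ¬ A₁.card ≤ 1 →
          ∑ A₀ ∈ s.powerset,
            (C ((-1 : ℤ) ^ (A₀ ∪ A₁).card) * X ^ (j + 1 - mrk M (↑(A₀ ∪ A₁) : Set α))) = 0 := by
        intro A₁ hA₁p hcard2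
        have hA₁B : A₁ ⊆ B := Finset.mem_powerset.mp hA₁p
        obtain ⟨e, he, f', hf', hef⟩ := Finset.one_lt_card.mp (show 1 < A₁.card by omega)
        have heB := hBmem e (hA₁B he)
        have hfB := hBmem f' (hA₁B hf')
        have hind : M.Indep {e, f'} := hsimple e f' (hmemE e) (hmemE f')
        set L : Set α := M.closure {e, f'} with hLdef
        have hLflat : M.IsFlat L := flat_closure M {e, f'}
        have hL2 : mrk M L = 2 := mrk_closure_pair hind hef
        have hpairsub : ({e, f'} : Set α) ⊆ Fj1 :=
          Set.insert_subset heB.1 (Set.singleton_subset_iff.mpr hfB.1)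
        have hLsub : L ⊆ Fj1 := by
          rw [← hFj1flat.closure]; exact M.closure_subset_closure hpairsub
        have hpairL : ({e, f'} : Set α) ⊆ L := M.subset_closure _ (hsub _)
        have heL : e ∈ L := hpairL (by simp)
        have hrkFL : mrk M (Fj ∪ L) = j + 1 := by
          refine le_antisymm ?_ ?_
          · have := mrk_mono' (Set.union_subset hFsub hLsub) (hsub Fj1)
            rwa [hrkFj1] at this
          · have h1 : mrk M (insert e Fj) = j + 1 := by
              rw [mrk_insert_of_not_mem_closure (hsub _) (hmemE e)
                (by rw [hclosFj]; exact heB.2), hrkFj]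
            have h2 : insert e Fj ⊆ Fj ∪ L :=
              Set.insert_subset (Or.inr heL) Set.subset_union_left
            exact h1 ▸ mrk_mono' h2 (hsub _)
        obtain ⟨g, hgFj, hgL⟩ := (hmod ⟨j, by omega⟩).2 L hLflat hL2
          (by show mrk M (Fj ∪ L) = mrk M Fj + 1; rw [hrkFL, hrkFj])
        have hgA₁ : g ∉ A₁ := fun h => (hBmem g (hA₁B h)).2 hgFj
        have hgs : g ∈ s := (hmem_s g).mpr hgFj
        have hgcl : ∀ D : Finset α, A₁ ⊆ D → g ∈ M.closure (↑D : Set α) := by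
          intro D hD
          have : ({e, f'} : Set α) ⊆ ↑D := by
            intro x hx
            rcases hx with rfl | hx
            · exact_mod_cast hD he
            · rcases hx with rfl; exact_mod_cast hD hf'
          exact M.closure_subset_closure this hgL
        have hpair : ∀ D : Finset α, A₁ ⊆ D → g ∉ D →
            C ((-1 : ℤ) ^ (insert g D).card) * X ^ (j + 1 - mrk M (↑(insert g D) : Set α)) +
            C ((-1 : ℤ) ^ D.card) * X ^ (j + 1 - mrk M (↑D : Set α)) = 0 := by
          intro D hD hgD
          have h1 : mrk M (↑(insert g D) : Set α) = mrk M (↑D : Set α) := by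
            rw [Finset.coe_insert]
            exact mrk_insert_of_mem_closure (hsub _) (hgcl D hD)
          rw [h1, Finset.card_insert_of_notMem hgD, pow_succ, mul_neg_one, map_neg]
          ring
        refine Finset.sum_involution
          (fun A₀ _ => if g ∈ A₀ then A₀.erase g else insert g A₀) ?_ ?_ ?_ ?_
        · intro A₀ hA₀
          by_cases hg : g ∈ A₀
          · simp only [if_pos hg]
            have e1 : A₀ ∪ A₁ = insert g (A₀.erase g ∪ A₁) := by
              rw [← Finset.insert_union, Finset.insert_erase hg]
            rw [e1]
            exact hpair _ Finset.subset_union_right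
              (by simp [Finset.mem_union, hgA₁])
          · simp only [if_neg hg]
            rw [Finset.insert_union, add_comm]
            exact hpair _ Finset.subset_union_right
              (by simp [Finset.mem_union, hgA₁, hg])
        · intro A₀ hA₀ _
          by_cases hg : g ∈ A₀
          · simp only [if_pos hg]
            intro hcon
            exact (Finset.notMem_erase g A₀) (hcon.symm ▸ hg)
          · simp only [if_neg hg]
            intro hcon
            exact hg (hcon ▸ Finset.mem_insert_self g A₀)
        · intro A₀ hA₀
          by_cases hg : g ∈ A₀
          · simp only [if_pos hg, Finset.mem_powerset]
            exact (Finset.erase_subset g A₀).trans (Finset.mem_powerset.mp hA₀)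
          · simp only [if_neg hg, Finset.mem_powerset]
            exact Finset.insert_subset hgs (Finset.mem_powerset.mp hA₀)
        · intro A₀ hA₀
          by_cases hg : g ∈ A₀
          · simp only [if_pos hg]
            rw [if_neg (Finset.notMem_erase g A₀), Finset.insert_erase hg]
          · simp only [if_neg hg]
            rw [if_pos (Finset.mem_insert_self g A₀), Finset.erase_insert hg]
      -- only the small inner sums survive
      rw [← Finset.sum_subset (Finset.filter_subset (fun A => A.card ≤ 1) B.powerset)
        (by intro A₁ h1 h2
            exact hcancel A₁ h1 (by simpa [Finset.mem_filter, h1] using h2))]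
      have hfilter : B.powerset.filter (fun A => A.card ≤ 1) =
          insert ∅ (B.image (fun a => ({a} : Finset α))) := by
        ext A
        simp only [Finset.mem_filter, Finset.mem_powerset, Finset.mem_insert, Finset.mem_image]
        constructor
        · rintro ⟨hAB, hc⟩
          rcases Nat.le_one_iff_eq_zero_or_eq_one.mp hc with h | h
          · exact Or.inl (Finset.card_eq_zero.mp h)
          · obtain ⟨a, rfl⟩ := Finset.card_eq_one.mp h
            exact Or.inr ⟨a, hAB (Finset.mem_singleton_self a), rfl⟩
        · rintro (rfl | ⟨a, ha, rfl⟩)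
          · simp
          · simp [Finset.singleton_subset_iff.mpr ha]
      rw [hfilter, Finset.sum_insert (by simp),
        Finset.sum_image (fun x _ y _ h => Finset.singleton_injective h)]
      have hS0 : ∑ A₀ ∈ s.powerset,
          (C ((-1:ℤ) ^ (A₀ ∪ ∅).card) * X ^ (j + 1 - mrk M (↑(A₀ ∪ ∅) : Set α))) = X * Sj := by
        rw [hSjdef, Finset.mul_sum]
        refine Finset.sum_congr rfl fun A₀ hA₀ => ?_
        rw [Finset.union_empty]
        have hm := hmrkA₀ A₀ hA₀
        have he2 : j + 1 - mrk M (↑A₀ : Set α) = (j - mrk M (↑A₀ : Set α)) + 1 := by omega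
        rw [he2, pow_succ]
        ring
      have hS1 : ∀ a ∈ B, ∑ A₀ ∈ s.powerset,
          (C ((-1:ℤ) ^ (A₀ ∪ {a}).card) * X ^ (j + 1 - mrk M (↑(A₀ ∪ {a}) : Set α))) = -Sj := by
        intro a ha
        have haF := hBmem a ha
        have hterm : ∀ A₀ ∈ s.powerset,
            C ((-1:ℤ) ^ (A₀ ∪ {a}).card) * X ^ (j + 1 - mrk M (↑(A₀ ∪ {a}) : Set α)) =
            -(C ((-1:ℤ) ^ A₀.card) * X ^ (j - mrk M (↑A₀ : Set α))) := by
          intro A₀ hA₀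
          have haA₀ : a ∉ A₀ := by
            intro hcon
            exact haF.2 ((hmem_s a).mp (Finset.mem_powerset.mp hA₀ hcon))
          rw [Finset.union_comm, ← Finset.insert_eq, hSe a haF.2 A₀ hA₀,
            Finset.card_insert_of_notMem haA₀, Nat.succ_sub_succ, pow_succ,
            mul_neg_one, map_neg]
          ring
        rw [Finset.sum_congr rfl hterm, hSjdef]
        exact Finset.sum_neg_distrib _
      rw [hS0, Finset.sum_congr rfl hS1, Finset.sum_const, nsmul_eq_mul]
      have hIH : Sj = ∏ i ∈ Finset.range j,
          (X - C (((F ⟨min (i+1) r, by omega⟩).ncard : ℤ) -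
            ((F ⟨min i r, by omega⟩).ncard : ℤ))) := by
        rw [hSjdef]; exact ih hjr ⟨j, by omega⟩ rfl
      rw [Finset.prod_range_succ, ← hIH]
      have hBcard : ((F ⟨min (j+1) r, by omega⟩).ncard : ℤ) -
          ((F ⟨min j r, by omega⟩).ncard : ℤ) = (B.card : ℤ) := by
        have e1 : F ⟨min (j+1) r, by omega⟩ = Fj1 :=
          congrArg F (Fin.eq_of_val_eq (show min (j+1) r = j+1 by omega))
        have e2 : F ⟨min j r, by omega⟩ = Fj :=
          congrArg F (Fin.eq_of_val_eq (show min j r = j by omega))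
        have hc1 : Fj1.ncard = t.card := Set.ncard_eq_toFinset_card _ _
        have hc2 : Fj.ncard = s.card := Set.ncard_eq_toFinset_card _ _
        have hcle := Finset.card_le_card hst
        rw [e1, e2, hc1, hc2, hBdef, Finset.card_sdiff_of_subset hst, Nat.cast_sub hcle]
      rw [hBcard, Polynomial.C_eq_natCast]
      ring
  have hmain : charPoly M =
      ∏ i : Fin r, (X - C (((F i.succ).ncard : ℤ) - ((F i.castSucc).ncard : ℤ))) := by
    have hkey := key r le_rfl (Fin.last r) (by simp)
    have huniv : (Set.toFinite (F (Fin.last r))).toFinset = (Finset.univ : Finset α) := by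
      apply Finset.ext; intro a
      simp [Set.Finite.mem_toFinset, htop, hE]
    rw [huniv, Finset.powerset_univ] at hkey
    rw [charPoly, hr, hkey, ← Fin.prod_univ_eq_prod_range]
    refine Finset.prod_congr rfl fun i _ => ?_
    have e1 : F ⟨min ((i:ℕ)+1) r, by omega⟩ = F i.succ :=
      congrArg F (Fin.eq_of_val_eq (show min ((i:ℕ)+1) r = (i:ℕ)+1 by
        have := i.isLt; omega))
    have e2 : F ⟨min (i:ℕ) r, by omega⟩ = F i.castSucc :=
      congrArg F (Fin.eq_of_val_eq (show min (i:ℕ) r = (i:ℕ) by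
        have := i.isLt; omega))
    rw [e1, e2]
  refine ⟨hmain, ?_⟩
  intro z hz
  rw [hmain, Polynomial.map_prod] at hz
  have hz0 := Polynomial.isRoot_of_mem_roots hz
  rw [Polynomial.IsRoot, Polynomial.eval_prod] at hz0
  obtain ⟨i, -, hi⟩ := Finset.prod_eq_zero_iff.mp hz0
  simp only [Polynomial.map_sub, Polynomial.map_X, Polynomial.map_C,
    Polynomial.eval_sub, Polynomial.eval_X, Polynomial.eval_C, sub_eq_zero] at hi
  have hle : (F i.castSucc).ncard ≤ (F i.succ).ncard :=
    Set.ncard_le_ncard (hmono (by simp [Fin.le_def])) (Set.toFinite _)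
  refine ⟨(F i.succ).ncard - (F i.castSucc).ncard, ?_⟩
  rw [hi, Int.coe_castRingHom]
  push_cast [Nat.cast_sub hle]
  ring
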